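/- For real numbers m, n with n > m > 0 and m + 2 < 2n, the improper integral ∫₀^∞ (x² - 1)·x^(m-1)·log(x)/(x^(2n) - 1) dx equals -(π²/(4n²))·(csc²(πm/(2n)) - csc²(π(m+2)/(2n))). -/

import Mathlib

open Real MeasureTheory Set


lemma summable_shift {γ : ℝ} (hγ : 0 < γ) :
    Summable (fun k : ℕ ↦ 1 / ((k : ℝ) + γ) ^ 2) := by
  rw [← summable_nat_add_iff 1]
  refine Summable.of_nonneg_of_le (fun k ↦ by positivity) (fun k ↦ ?_)
    ((summable_nat_add_iff 1).mpr (Real.summable_one_div_nat_pow.mpr one_lt_two))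
  push_cast
  refine one_div_le_one_div_of_le (by positivity) ?_
  nlinarith [hγ.le, (Nat.cast_nonneg k : (0:ℝ) ≤ k)]

section sub

variable {c : ℝ}

lemma exp_img : (fun t : ℝ ↦ Real.exp (-t)) '' (Ioi 0) = Ioo (0:ℝ) 1 := by
  ext y
  constructor
  · rintro ⟨t, ht, rfl⟩
    refine ⟨Real.exp_pos _, ?_⟩
    rw [Real.exp_lt_one_iff]
    simpa using (mem_Ioi.mp ht)
  · rintro ⟨hy0, hy1⟩
    exact ⟨-Real.log y, by simpa using Real.log_neg hy0 hy1, by simp [Real.exp_log hy0]⟩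

lemma exp_deriv : ∀ t ∈ Ioi (0:ℝ), HasDerivWithinAt (fun t : ℝ ↦ Real.exp (-t))
    (-Real.exp (-t)) (Ioi 0) t := by
  intro t _
  simpa [Function.comp_def] using ((Real.hasDerivAt_exp (-t)).comp t (hasDerivAt_neg t)).hasDerivWithinAt

lemma exp_injOn : InjOn (fun t : ℝ ↦ Real.exp (-t)) (Ioi 0) := fun a _ b _ hab ↦ by
  have := Real.exp_injective hab; linarith

lemma exp_pt (hc : 0 < c) : ∀ x ∈ Ioi (0:ℝ),
    -(x * Real.exp (-(c*x)))
      = |(-Real.exp (-x))| • (Real.exp (-x) ^ (c - 1) * Real.log (Real.exp (-x))) := by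
  intro x _
  rw [abs_neg, abs_of_pos (Real.exp_pos _), Real.log_exp,
    Real.rpow_def_of_pos (Real.exp_pos _), Real.log_exp, smul_eq_mul, mul_comm, ← mul_assoc, ← Real.exp_add]
  ring_nf

lemma integrable_texp (hc : 0 < c) :
    IntegrableOn (fun t : ℝ ↦ -(t * Real.exp (-(c * t)))) (Ioi 0) := by
  have h := integrableOn_rpow_mul_exp_neg_mul_rpow (p := 1) (s := 1) (b := c)
    (by norm_num) one_pos hc
  refine Integrable.neg (h.congr_fun (fun x hx ↦ ?_) measurableSet_Ioi)
  simp [Real.rpow_one]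

lemma integrable_rpow_mul_log (hc : 0 < c) :
    IntegrableOn (fun x : ℝ ↦ x ^ (c - 1) * Real.log x) (Ioo (0:ℝ) 1) := by
  rw [← exp_img,
    integrableOn_image_iff_integrableOn_abs_deriv_smul measurableSet_Ioi exp_deriv exp_injOn]
  exact (integrable_texp hc).congr_fun (fun x hx ↦ exp_pt hc x hx) measurableSet_Ioi

lemma integral_rpow_mul_log (hc : 0 < c) :
    ∫ x in Ioo (0:ℝ) 1, x ^ (c - 1) * Real.log x = -(1 / c ^ 2) := by
  rw [← exp_img,
    integral_image_eq_integral_abs_deriv_smul measurableSet_Ioi exp_deriv exp_injOn,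
    ← setIntegral_congr_fun measurableSet_Ioi (exp_pt hc), integral_neg]
  have := integral_rpow_mul_exp_neg_mul_Ioi (a := 2) (r := c) (by norm_num) hc
  rw [Real.Gamma_two, mul_one] at this
  have h1 : ∀ t ∈ Ioi (0:ℝ), t ^ (2 - 1 : ℝ) * Real.exp (-(c * t)) = t * Real.exp (-(c*t)) := by
    intro t ht
    norm_num
  rw [setIntegral_congr_fun measurableSet_Ioi h1] at this
  rw [this, one_div, inv_rpow hc.le, ← Real.rpow_natCast c 2]
  norm_num

end sub

lemma summable_aux {p b : ℝ} (hp : 0 < p) (hb : 1 ≤ b) :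
    Summable (fun k : ℕ ↦ 1 / (p + b * k) ^ 2) := by
  refine Summable.of_nonneg_of_le (fun k ↦ by positivity) (fun k ↦ ?_)
    ((summable_shift hp).congr (fun k ↦ by rw [add_comm]))
  refine one_div_le_one_div_of_le (by positivity) ?_
  have : (k : ℝ) ≤ b * k := le_mul_of_one_le_left (Nat.cast_nonneg k) hb
  nlinarith [Nat.cast_nonneg (α := ℝ) k, hp.le]

lemma key_Ioo {p b : ℝ} (hp : 0 < p) (hb : 2 < b) :
    ∫ x in Ioo (0:ℝ) 1, (x^2 - 1) * x ^ (p - 1) * Real.log x / (x ^ b - 1)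
      = ∑' k : ℕ, (1 / (p + 2 + b * k) ^ 2 - 1 / (p + b * k) ^ 2) := by
  set c1 : ℕ → ℝ := fun k ↦ p + b * k with hc1
  set c2 : ℕ → ℝ := fun k ↦ p + 2 + b * k with hc2
  have hc1pos : ∀ k, 0 < c1 k := fun k ↦ by
    have : (0:ℝ) ≤ b * k := by positivity
    simp only [hc1]; linarith
  have hc2pos : ∀ k, 0 < c2 k := fun k ↦ by
    have : (0:ℝ) ≤ b * k := by positivity
    simp only [hc2]; linarith
  set f : ℕ → ℝ → ℝ := fun k x ↦ (x ^ (c1 k - 1) - x ^ (c2 k - 1)) * Real.log x with hf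
  -- pointwise identity
  have hA : ∀ x ∈ Ioo (0:ℝ) 1,
      (x^2 - 1) * x ^ (p - 1) * Real.log x / (x ^ b - 1) = ∑' k, f k x := by
    rintro x ⟨hx0, hx1⟩
    have hxb1 : x ^ b < 1 := Real.rpow_lt_one hx0.le hx1 (by linarith)
    have hxb0 : (0:ℝ) ≤ x ^ b := Real.rpow_nonneg hx0.le _
    have hgeo := (hasSum_geometric_of_lt_one hxb0 hxb1).mul_right
      ((x ^ (p-1) - x ^ (p+1)) * Real.log x)
    have hterm : ∀ k : ℕ, (x ^ b) ^ k * ((x ^ (p-1) - x ^ (p+1)) * Real.log x) = f k x := by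
      intro k
      have hbk : (x ^ b) ^ k = x ^ (b * k) := by
        rw [← Real.rpow_natCast (x ^ b) k, ← Real.rpow_mul hx0.le]
      have e1 : x ^ (b*(k:ℝ)) * x ^ (p-1) = x ^ (c1 k - 1) := by
        rw [← Real.rpow_add hx0]; congr 1; simp only [hc1]; ring
      have e2 : x ^ (b*(k:ℝ)) * x ^ (p+1) = x ^ (c2 k - 1) := by
        rw [← Real.rpow_add hx0]; congr 1; simp only [hc2]; ring
      rw [hbk, hf]
      simp only []
      rw [← e1, ← e2]
      ring
    have hsum := (hgeo.congr_fun fun k ↦ (hterm k).symm)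
    rw [hsum.tsum_eq]
    have hx2 : x ^ (p + 1) = x ^ (p - 1) * x ^ 2 := by
      rw [show p + 1 = (p - 1) + (2:ℕ) by push_cast; ring, Real.rpow_add hx0,
        Real.rpow_natCast]
    have hbne : x ^ b - 1 ≠ 0 := by linarith
    have hbne' : (1:ℝ) - x ^ b ≠ 0 := by linarith
    rw [hx2]
    field_simp
    ring
  rw [setIntegral_congr_fun measurableSet_Ioo hA]
  -- integrability of each term
  have hfk : ∀ k, IntegrableOn (f k) (Ioo (0:ℝ) 1) := by
    intro k
    have h1 := integrable_rpow_mul_log (hc1pos k)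
    have h2 := integrable_rpow_mul_log (hc2pos k)
    have h12 : IntegrableOn (fun x : ℝ ↦ x ^ (c1 k - 1) * Real.log x
        - x ^ (c2 k - 1) * Real.log x) (Ioo (0:ℝ) 1) := h1.sub h2
    exact h12.congr_fun (fun x _ ↦ by rw [hf]; ring) measurableSet_Ioo
  have hnorm : ∀ k, ∀ x ∈ Ioo (0:ℝ) 1,
      ‖f k x‖ = (x ^ (c1 k - 1) - x ^ (c2 k - 1)) * (-Real.log x) := by
    rintro k x ⟨hx0, hx1⟩
    have hmono : x ^ (c2 k - 1) ≤ x ^ (c1 k - 1) :=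
      Real.rpow_le_rpow_of_exponent_ge hx0 hx1.le (by simp only [hc1, hc2]; linarith)
    rw [hf, norm_mul, Real.norm_eq_abs, Real.norm_eq_abs,
      abs_of_nonneg (sub_nonneg.mpr hmono), abs_of_nonpos (Real.log_nonpos hx0.le hx1.le)]
  have hint_norm : ∀ k, ∫ x in Ioo (0:ℝ) 1, ‖f k x‖ = 1 / c1 k ^ 2 - 1 / c2 k ^ 2 := by
    intro k
    rw [setIntegral_congr_fun measurableSet_Ioo (hnorm k)]
    have : ∀ x ∈ Ioo (0:ℝ) 1, (x ^ (c1 k - 1) - x ^ (c2 k - 1)) * (-Real.log x)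
        = x ^ (c2 k - 1) * Real.log x - x ^ (c1 k - 1) * Real.log x := fun x _ ↦ by ring
    rw [setIntegral_congr_fun measurableSet_Ioo this,
      integral_sub (integrable_rpow_mul_log (hc2pos k)) (integrable_rpow_mul_log (hc1pos k)),
      integral_rpow_mul_log (hc2pos k), integral_rpow_mul_log (hc1pos k)]
    ring
  have hint : ∀ k, ∫ x in Ioo (0:ℝ) 1, f k x = 1 / c2 k ^ 2 - 1 / c1 k ^ 2 := by
    intro k
    have : ∀ x ∈ Ioo (0:ℝ) 1, f k x
        = x ^ (c1 k - 1) * Real.log x - x ^ (c2 k - 1) * Real.log x := fun x _ ↦ by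
      rw [hf]; ring
    rw [setIntegral_congr_fun measurableSet_Ioo this,
      integral_sub (integrable_rpow_mul_log (hc1pos k)) (integrable_rpow_mul_log (hc2pos k)),
      integral_rpow_mul_log (hc2pos k), integral_rpow_mul_log (hc1pos k)]
    ring
  have hmeas : ∀ k, AEStronglyMeasurable (f k) (volume.restrict (Ioo (0:ℝ) 1)) :=
    fun k ↦ (hfk k).aestronglyMeasurable
  have hlint : ∑' k, ∫⁻ x, ‖f k x‖₊ ∂(volume.restrict (Ioo (0:ℝ) 1)) ≠ ⊤ := by
    have heq : ∀ k, ∫⁻ x, ‖f k x‖₊ ∂(volume.restrict (Ioo (0:ℝ) 1))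
        = ENNReal.ofReal (1 / c1 k ^ 2 - 1 / c2 k ^ 2) := by
      intro k
      rw [← hint_norm k]
      rw [MeasureTheory.ofReal_integral_eq_lintegral_ofReal (hfk k).norm
        (ae_of_all _ fun x ↦ norm_nonneg _)]
      simp only [ofReal_norm, enorm_eq_nnnorm]
    simp_rw [heq]
    have hble : ∑' k, ENNReal.ofReal (1 / c1 k ^ 2 - 1 / c2 k ^ 2)
        ≤ ∑' k, ENNReal.ofReal (1 / c1 k ^ 2) := by
      refine ENNReal.tsum_le_tsum fun k ↦ ENNReal.ofReal_le_ofReal ?_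
      have : 0 ≤ 1 / c2 k ^ 2 := by positivity
      linarith
    refine ne_top_of_le_ne_top ?_ hble
    rw [← ENNReal.ofReal_tsum_of_nonneg (fun k ↦ by positivity)
      (summable_aux hp (by linarith))]
    exact ENNReal.ofReal_ne_top
  rw [MeasureTheory.integral_tsum hmeas hlint]
  refine tsum_congr fun k ↦ ?_
  rw [hint k]

lemma meas_main {p b : ℝ} :
    Measurable (fun x : ℝ ↦ (x^2 - 1) * x ^ (p - 1) * Real.log x / (x ^ b - 1)) := by
  have h1 : Measurable fun x : ℝ ↦ x ^ (p-1) := by measurability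
  have h2 : Measurable fun x : ℝ ↦ x ^ b := by measurability
  exact ((((measurable_id.pow_const 2).sub measurable_const).mul h1).mul
    Real.measurable_log).div (h2.sub measurable_const)

lemma integrable_main_Ioo {p b : ℝ} (hp : 0 < p) (hb : 2 < b) :
    IntegrableOn (fun x : ℝ ↦ (x^2 - 1) * x ^ (p - 1) * Real.log x / (x ^ b - 1))
      (Ioo (0:ℝ) 1) := by
  refine Integrable.mono' ((integrable_rpow_mul_log hp).norm)
    meas_main.aestronglyMeasurable ?_
  rw [ae_restrict_iff' measurableSet_Ioo]
  refine ae_of_all _ ?_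
  rintro x ⟨hx0, hx1⟩
  have hxb : x ^ b ≤ x ^ (2:ℝ) :=
    Real.rpow_le_rpow_of_exponent_ge hx0 hx1.le (by linarith)
  rw [Real.rpow_two] at hxb
  have hxb1 : x ^ b < 1 := lt_of_le_of_lt hxb (by nlinarith)
  have heq : (x^2 - 1) * x ^ (p - 1) * Real.log x / (x ^ b - 1)
      = (x ^ (p-1) * Real.log x) * ((x^2 - 1) / (x ^ b - 1)) := by ring
  rw [heq, norm_mul]
  have h1 : ‖(x^2 - 1) / (x ^ b - 1)‖ ≤ 1 := by
    have hq : (x^2 - 1) / (x ^ b - 1) = (1 - x^2) / (1 - x ^ b) := by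
      rw [← neg_div_neg_eq]; ring_nf
    rw [hq, Real.norm_eq_abs, abs_of_nonneg (div_nonneg (by nlinarith) (by linarith))]
    rw [div_le_one (by linarith)]
    linarith
  calc ‖x ^ (p-1) * Real.log x‖ * ‖(x^2 - 1) / (x ^ b - 1)‖
      ≤ ‖x ^ (p-1) * Real.log x‖ * 1 := by gcongr
    _ = ‖x ^ (p-1) * Real.log x‖ := mul_one _

lemma inv_img : (fun x : ℝ ↦ x⁻¹) '' (Ioo (0:ℝ) 1) = Ioi (1:ℝ) := by
  ext y
  constructor
  · rintro ⟨x, ⟨hx0, hx1⟩, rfl⟩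
    exact mem_Ioi.mpr ((one_lt_inv₀ hx0).mpr hx1)
  · intro hy
    have hy1 : (1:ℝ) < y := mem_Ioi.mp hy
    exact ⟨y⁻¹, ⟨by positivity, inv_lt_one_of_one_lt₀ hy1⟩, by simp⟩

lemma inv_deriv : ∀ x ∈ Ioo (0:ℝ) 1, HasDerivWithinAt (fun y : ℝ ↦ y⁻¹)
    (-(x^2)⁻¹) (Ioo (0:ℝ) 1) x := fun x hx ↦
  (hasDerivAt_inv (ne_of_gt hx.1)).hasDerivWithinAt

lemma inv_injOn : InjOn (fun y : ℝ ↦ y⁻¹) (Ioo (0:ℝ) 1) :=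
  fun _ _ _ _ hab ↦ inv_injective hab

lemma subst_pt {q b : ℝ} (hb : 2 < b) : ∀ x ∈ Ioo (0:ℝ) 1,
    |(-(x^2)⁻¹)| • ((x⁻¹^2 - 1) * x⁻¹ ^ (q - 1) * Real.log x⁻¹ / (x⁻¹ ^ b - 1))
      = -((x^2 - 1) * x ^ (b - q - 3) * Real.log x / (x ^ b - 1)) := by
  rintro x ⟨hx0, hx1⟩
  have hx2 : (0:ℝ) < x^2 := by positivity
  have hd0 : (0:ℝ) < x ^ b := Real.rpow_pos_of_pos hx0 _
  have hd1 : x ^ b < 1 := Real.rpow_lt_one hx0.le hx1 (by linarith)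
  have hsplit : x ^ (b - q - 3) = x ^ b * (x ^ (q-1))⁻¹ * ((x^2)^2)⁻¹ := by
    rw [show b - q - 3 = b + (-(q-1)) + (-4 : ℝ) by ring,
      Real.rpow_add hx0, Real.rpow_add hx0, Real.rpow_neg hx0.le,
      Real.rpow_neg hx0.le]
    congr 1
    rw [show (4:ℝ) = ((4:ℕ):ℝ) by norm_num, Real.rpow_natCast]
    norm_num
    ring
  rw [smul_eq_mul, abs_neg, abs_of_pos (by positivity), Real.log_inv,
    Real.inv_rpow hx0.le, Real.inv_rpow hx0.le, inv_pow, hsplit]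
  have he0 : x ^ (q-1) ≠ 0 := (Real.rpow_pos_of_pos hx0 _).ne'
  have hdinv : (x ^ b)⁻¹ - 1 ≠ 0 := by
    have : (1:ℝ) < (x ^ b)⁻¹ := (one_lt_inv₀ hd0).mpr hd1
    linarith
  field_simp
  have hq1 : (0:ℝ) < x ^ (q-1) := Real.rpow_pos_of_pos hx0 _
  congr 1
  rw [div_eq_div_iff (by linarith) (by linarith)]
  ring

lemma int_ne {a : ℝ} (h0 : 0 < a) (h1 : a < 1) (n : ℤ) : a - (n:ℝ) ≠ 0 := by
  rcases le_or_gt n 0 with hn | hn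
  · have : (n:ℝ) ≤ 0 := by exact_mod_cast hn
    intro hc; linarith
  · have : (1:ℝ) ≤ (n:ℝ) := by exact_mod_cast hn
    intro hc; linarith

lemma summable_int_sq {a : ℝ} (h0 : 0 < a) (h1 : a < 1) :
    Summable (fun i : ℤ ↦ 1 / (a - (i:ℝ)) ^ 2) := by
  refine Summable.of_nat_of_neg ?_ ?_
  · rw [← summable_nat_add_iff 1]
    refine ((summable_shift (by linarith : (0:ℝ) < 1 - a)).congr (fun k ↦ ?_))
    push_cast
    congr 1
    ring
  · refine ((summable_shift h0).congr (fun k ↦ ?_))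
    push_cast
    congr 1
    ring

lemma hasSum_int_csc {a : ℝ} (h0 : 0 < a) (h1 : a < 1) :
    HasSum (fun i : ℤ ↦ 1 / (a - (i:ℝ)) ^ 2) (π ^ 2 / Real.sin (π * a) ^ 2) := by
  haveI : Fact (0 < (1:ℝ)) := ⟨one_pos⟩
  have hsin : Real.sin (π * a) ≠ 0 :=
    ne_of_gt (Real.sin_pos_of_pos_of_lt_pi (by positivity)
      (by nlinarith [Real.pi_pos]))
  set F : ℝ → ℂ := fun x ↦ Complex.exp (((2 * π * a * x : ℝ) : ℂ) * Complex.I) with hF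
  have hFnorm : ∀ x : ℝ, ‖F x‖ = 1 := fun x ↦ by
    rw [hF]; exact Complex.norm_exp_ofReal_mul_I _
  have hFcont : Continuous F := by
    apply Complex.continuous_exp.comp
    exact (Complex.continuous_ofReal.comp (by continuity)).mul continuous_const
  set G : AddCircle 1 → ℂ := AddCircle.liftIoc 1 0 F with hG
  have hGmeas : Measurable G := by
    exact ((hFcont.measurable.comp measurable_subtype_coe).comp
      (AddCircle.measurableEquivIoc 1 0).measurable)
  have hGnorm : ∀ z, ‖G z‖ = 1 := fun z ↦ hFnorm _
  have hG2 : MemLp G 2 AddCircle.haarAddCircle :=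
    MemLp.of_bound hGmeas.aestronglyMeasurable 1
      (ae_of_all _ fun z ↦ (hGnorm z).le)
  set f := hG2.toLp G with hf
  have hcoeff : ∀ i : ℤ, fourierCoeff (⇑f) i = fourierCoeff G i := by
    intro i
    unfold fourierCoeff
    refine integral_congr_ae ?_
    filter_upwards [hG2.coeFn_toLp] with z hz
    simp only [hf]
    rw [hz]
  -- value of the Fourier coefficients
  have hcval : ∀ i : ℤ, fourierCoeff G i
      = (Complex.exp (((2*π*a : ℝ):ℂ) * Complex.I) - 1) / (((2*π*(a - i) : ℝ):ℂ) * Complex.I) := by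
    intro i
    rw [hG, fourierCoeff_liftIoc_eq]
    rw [fourierCoeffOn_eq_integral]
    set c : ℂ := ((2*π*(a - i) : ℝ):ℂ) * Complex.I with hc
    have hc0 : c ≠ 0 := by
      rw [hc]
      apply mul_ne_zero _ Complex.I_ne_zero
      rw [Complex.ofReal_ne_zero]
      have := int_ne h0 h1 i
      positivity
    have hterm : ∀ x : ℝ, fourier (-i) ((x : ℝ) : AddCircle ((0:ℝ) + 1 - 0)) • F x
        = Complex.exp (c * x) := by
      intro x
      rw [fourier_coe_apply, hF, smul_eq_mul, ← Complex.exp_add, hc]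
      congr 1
      push_cast
      ring
    simp_rw [hterm]
    rw [integral_exp_mul_complex hc0]
    have he : Complex.exp (c * (0 + 1 : ℝ)) = Complex.exp (((2*π*a : ℝ):ℂ) * Complex.I) := by
      rw [hc]
      push_cast
      rw [show (2*(π:ℂ)*(a - i)) * Complex.I * (0+1) =
        2*π*a*Complex.I + ((-i : ℤ) : ℂ) * (2 * π * Complex.I) by push_cast; ring,
        Complex.exp_add, Complex.exp_int_mul_two_pi_mul_I, mul_one]
    have he0 : Complex.exp (c * (0 : ℝ)) = 1 := by
      norm_num
    rw [he, he0]
    norm_num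
  -- norm of the Fourier coefficients
  have hnsq : ∀ i : ℤ, ‖fourierCoeff G i‖ ^ 2
      = (Real.sin (π*a) ^ 2 / π ^ 2) * (1 / (a - (i:ℝ)) ^ 2) := by
    intro i
    rw [hcval i, norm_div, div_pow]
    have hden : ‖((2*π*(a - (i:ℝ)) : ℝ):ℂ) * Complex.I‖ ^ 2 = 4 * π^2 * (a - i)^2 := by
      rw [norm_mul, Complex.norm_I, mul_one,
        Complex.norm_real, Real.norm_eq_abs, _root_.sq_abs]
      ring
    have hnum : ‖Complex.exp (((2*π*a : ℝ):ℂ) * Complex.I) - 1‖ ^ 2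
        = 4 * Real.sin (π*a) ^ 2 := by
      rw [Complex.exp_mul_I]
      have hz : Complex.cos ((2*π*a : ℝ):ℂ) + Complex.sin ((2*π*a : ℝ):ℂ) * Complex.I - 1
          = ((Real.cos (2*π*a) - 1 : ℝ) : ℂ) + ((Real.sin (2*π*a) : ℝ):ℂ) * Complex.I := by
        rw [(Complex.ofReal_cos _).symm, (Complex.ofReal_sin _).symm]
        push_cast
        ring
      rw [hz, Complex.sq_norm, Complex.normSq_add_mul_I]
      have hc2 : Real.cos (2*π*a) = 1 - 2 * Real.sin (π*a)^2 := by
        rw [show 2*π*a = 2*(π*a) by ring, Real.cos_two_mul]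
        nlinarith [Real.sin_sq_add_cos_sq (π*a)]
      nlinarith [Real.sin_sq_add_cos_sq (2*π*a)]
    rw [hden, hnum]
    have hne : (a - (i:ℝ))^2 ≠ 0 := pow_ne_zero _ (int_ne h0 h1 i)
    field_simp
  -- Parseval
  have hpars := tsum_sq_fourierCoeff f
  have hrhs : ∫ t : AddCircle 1, ‖f t‖ ^ 2 ∂AddCircle.haarAddCircle = 1 := by
    rw [integral_congr_ae (g := fun _ ↦ (1:ℝ)) ?_]
    · simp
    · filter_upwards [hG2.coeFn_toLp] with z hz
      simp only [hf]
      rw [hz, hGnorm z, one_pow]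
  rw [hrhs] at hpars
  have hsum : (Real.sin (π*a) ^ 2 / π ^ 2) * ∑' i : ℤ, 1 / (a - (i:ℝ)) ^ 2 = 1 := by
    rw [← tsum_mul_left]
    calc ∑' i : ℤ, (Real.sin (π*a) ^ 2 / π ^ 2) * (1 / (a - (i:ℝ)) ^ 2)
        = ∑' i : ℤ, ‖fourierCoeff (⇑f) i‖ ^ 2 :=
          tsum_congr fun i ↦ by rw [hcoeff i, hnsq i]
      _ = 1 := hpars
  have hS := (summable_int_sq h0 h1).hasSum
  have hval : ∑' i : ℤ, 1 / (a - (i:ℝ)) ^ 2 = π ^ 2 / Real.sin (π*a) ^ 2 := by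
    have hπ : (π:ℝ) ≠ 0 := Real.pi_ne_zero
    field_simp at hsum ⊢
    linear_combination hsum
  rwa [hval] at hS

lemma hasSum_csc_sq {a : ℝ} (h0 : 0 < a) (h1 : a < 1) :
    HasSum (fun k : ℕ ↦ 1 / ((k:ℝ) + a) ^ 2 + 1 / ((k:ℝ) + 1 - a) ^ 2)
      (π ^ 2 / Real.sin (π * a) ^ 2) := by
  have h := (hasSum_int_csc h0 h1)
  have h2 : HasSum (fun i : ℤ ↦ 1 / (a + (i:ℝ)) ^ 2) (π ^ 2 / Real.sin (π * a) ^ 2) := by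
    have := ((Equiv.neg ℤ).hasSum_iff (f := fun i : ℤ ↦ 1 / (a - (i:ℝ)) ^ 2)).mpr h
    refine this.congr_fun fun i ↦ ?_
    simp only [Equiv.neg_apply, Function.comp_apply]
    push_cast
    congr 1
    ring
  refine h2.nat_add_neg_add_one.congr_fun fun k ↦ ?_
  push_cast
  congr 2 <;> ring

theorem gr_4_235_2 (m n : ℝ) (hm : 0 < m) (hmn : m < n) (h : m + 2 < 2*n) :
    ∫ x in Ioi (0:ℝ), (x^2 - 1) * x ^ (m - 1) * Real.log x / (x ^ (2*n) - 1)
      = -(π^2 / (4*n^2)) *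
        (1 / (Real.sin (π*m/(2*n)))^2 - 1 / (Real.sin (π*(m+2)/(2*n)))^2) := by
  have hn : 0 < n := lt_trans hm hmn
  have hb : 2 < 2*n := by linarith
  set q : ℝ := 2*n - m - 2 with hqdef
  have hq : 0 < q := by simp only [hqdef]; linarith
  set g : ℝ → ℝ := fun x ↦ (x^2 - 1) * x ^ (m - 1) * Real.log x / (x ^ (2*n) - 1) with hg
  have hpteq : ∀ x ∈ Ioo (0:ℝ) 1, |(-(x^2)⁻¹)| • g x⁻¹
      = -((x^2 - 1) * x ^ (q - 1) * Real.log x / (x ^ (2*n) - 1)) := by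
    intro x hx
    have hs := subst_pt (q := m) (b := 2*n) hb x hx
    rw [hg]
    simp only []
    rw [hs, show 2*n - m - 3 = q - 1 by rw [hqdef]; ring]
  -- integral over (1, ∞)
  have himg : ∫ x in Ioi (1:ℝ), g x = ∫ x in Ioo (0:ℝ) 1, |(-(x^2)⁻¹)| • g x⁻¹ := by
    rw [← inv_img, integral_image_eq_integral_abs_deriv_smul measurableSet_Ioo
      inv_deriv inv_injOn g]
  have hIoi : IntegrableOn g (Ioi (1:ℝ)) := by
    rw [← inv_img, integrableOn_image_iff_integrableOn_abs_deriv_smul measurableSet_Ioo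
      inv_deriv inv_injOn]
    have hneg : IntegrableOn
        (fun x : ℝ ↦ -((x^2 - 1) * x ^ (q - 1) * Real.log x / (x ^ (2*n) - 1)))
        (Ioo (0:ℝ) 1) := (integrable_main_Ioo hq hb).neg
    exact hneg.congr_fun (fun x hx ↦ (hpteq x hx).symm) measurableSet_Ioo
  have hIoival : ∫ x in Ioi (1:ℝ), g x
      = ∑' k : ℕ, (1 / (q + 2*n*k) ^ 2 - 1 / (q + 2 + 2*n*k) ^ 2) := by
    rw [himg, setIntegral_congr_fun measurableSet_Ioo hpteq, integral_neg,
      key_Ioo hq hb, ← tsum_neg]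
    exact tsum_congr fun k ↦ by ring
  -- split the integral
  have hsplit : ∫ x in Ioi (0:ℝ), g x
      = (∫ x in Ioo (0:ℝ) 1, g x) + ∫ x in Ioi (1:ℝ), g x := by
    have hu := MeasureTheory.setIntegral_union (μ := volume) (f := g)
      (s := Ioo (0:ℝ) 1) (t := Ici (1:ℝ))
      (Set.disjoint_left.mpr fun x hx hx' ↦ absurd hx.2 (not_lt.mpr hx'))
      measurableSet_Ici (integrable_main_Ioo hm hb)
      (Iff.mpr integrableOn_Ici_iff_integrableOn_Ioi hIoi)
    rw [Set.Ioo_union_Ici_eq_Ioi (by norm_num : (0:ℝ) < 1)] at hu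
    rw [hu, MeasureTheory.integral_Ici_eq_integral_Ioi]
  -- the series
  have hα0 : 0 < m/(2*n) := by positivity
  have hα1 : m/(2*n) < 1 := by rw [div_lt_one (by linarith)]; linarith
  have hβ0 : 0 < (m+2)/(2*n) := by positivity
  have hβ1 : (m+2)/(2*n) < 1 := by rw [div_lt_one (by linarith)]; linarith
  have Hα := hasSum_csc_sq hα0 hα1
  have Hβ := hasSum_csc_sq hβ0 hβ1
  have key : ∀ r : ℝ, 0 < r → ∀ k : ℕ,
      ((2*n)^2)⁻¹ * (1/((k:ℝ) + r/(2*n))^2) = 1/(r + 2*n*k)^2 := by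
    intro r hr k
    have h2 : (0:ℝ) < (k:ℝ) + r/(2*n) :=
      add_pos_of_nonneg_of_pos (Nat.cast_nonneg k) (div_pos hr (by linarith))
    rw [show r + 2*n*(k:ℝ) = (2*n)*((k:ℝ) + r/(2*n)) by field_simp; ring, mul_pow]
    field_simp
  have H := (Hβ.sub Hα).mul_left ((2*n)^2)⁻¹
  have hterm : ∀ k : ℕ,
      ((2*n)^2)⁻¹ * ((1/((k:ℝ) + (m+2)/(2*n))^2 + 1/((k:ℝ) + 1 - (m+2)/(2*n))^2)
        - (1/((k:ℝ) + m/(2*n))^2 + 1/((k:ℝ) + 1 - m/(2*n))^2))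
      = (1/(m+2+2*n*k)^2 - 1/(m+2*n*k)^2) + (1/(q+2*n*k)^2 - 1/(q+2+2*n*k)^2) := by
    intro k
    have e1 : (k:ℝ) + 1 - (m+2)/(2*n) = (k:ℝ) + q/(2*n) := by
      rw [hqdef]; field_simp; ring
    have e2 : (k:ℝ) + 1 - m/(2*n) = (k:ℝ) + (q+2)/(2*n) := by
      rw [hqdef]; field_simp; ring
    rw [e1, e2, mul_sub, mul_add, mul_add, key _ (by linarith) k, key _ hm k,
      key _ hq k, key _ (by linarith) k]
    ring
  have H2 := H.congr_fun fun k ↦ (hterm k).symm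
  have S1 : Summable (fun k : ℕ ↦ 1/(m+2+2*n*(k:ℝ))^2 - 1/(m+2*n*(k:ℝ))^2) :=
    (summable_aux (by linarith) (by linarith)).sub (summable_aux hm (by linarith))
  have S2 : Summable (fun k : ℕ ↦ 1/(q+2*n*(k:ℝ))^2 - 1/(q+2+2*n*(k:ℝ))^2) :=
    (summable_aux hq (by linarith)).sub (summable_aux (by linarith) (by linarith))
  rw [hsplit, key_Ioo hm hb, hIoival, ← Summable.tsum_add S1 S2, H2.tsum_eq]
  -- final algebra
  have s1 : Real.sin (π*m/(2*n)) ≠ 0 := by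
    refine ne_of_gt (Real.sin_pos_of_pos_of_lt_pi (by positivity) ?_)
    rw [show π*m/(2*n) = π*(m/(2*n)) by ring]
    nlinarith [Real.pi_pos]
  have s2 : Real.sin (π*(m+2)/(2*n)) ≠ 0 := by
    refine ne_of_gt (Real.sin_pos_of_pos_of_lt_pi (by positivity) ?_)
    rw [show π*(m+2)/(2*n) = π*((m+2)/(2*n)) by ring]
    nlinarith [Real.pi_pos]
  rw [show π*((m+2)/(2*n)) = π*(m+2)/(2*n) by ring,
    show π*(m/(2*n)) = π*m/(2*n) by ring]
  field_simp
  ring
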